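/- In the trading graph constructed by the reduction from a 3D-matching instance (X,Y,Z,T) with |X|=|Y|=|Z|=n, there exists an execution with exactly 8n exchanges if and only if the 3D-matching instance admits a perfect matching (a set S ⊆ T of n pairwise-disjoint triples). -/

import Mathlib

structure TState (N M : Type) where
  own : N → Finset M
  dem : N → Finset M

variable {N M : Type} [DecidableEq N] [DecidableEq M]

/-- In a trading cycle `c = [(i₁,j₁),…,(i_k,j_k)]`, agent `i_t` receives item `j_t`;
`gives c` pairs each agent with the item he gives, namely `j_{t-1}` (cyclically). -/
def gives (c : List (N × M)) : List (N × M) :=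
  (c.map Prod.fst).zip ((c.rotate (c.length - 1)).map Prod.snd)

/-- A valid cycle step: nonempty, visits each agent and each item at most once,
every participating agent receives an item he currently demands and gives an item
he currently owns. -/
def ValidCycle (s : TState N M) (c : List (N × M)) : Prop :=
  c ≠ [] ∧ (c.map Prod.fst).Nodup ∧ (c.map Prod.snd).Nodup ∧
    (∀ p ∈ c, p.2 ∈ s.dem p.1) ∧ (∀ p ∈ gives c, p.2 ∈ s.own p.1)

/-- The state after executing a cycle: every used demand edge is reversed into a
supply edge (the received item moves into the agent's supply and leaves his demand),
and every used supply edge is removed. -/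
def stepCycle (s : TState N M) (c : List (N × M)) : TState N M where
  own i := ((s.own i).filter fun j => (i, j) ∉ gives c) ∪
      ((c.filter fun p => decide (p.1 = i)).map Prod.snd).toFinset
  dem i := (s.dem i).filter fun j => (i, j) ∉ c

/-- An execution is a sequence of cycle steps, each valid in the successively
updated state. -/
def ValidExec (s : TState N M) : List (List (N × M)) → Prop
  | [] => True
  | c :: r => ValidCycle s c ∧ ValidExec (stepCycle s c) r

/-- Total number of exchanges (items received) in an execution. -/
def exchanges (r : List (List (N × M))) : ℕ := (r.map List.length).sum

/-- Number of items agent `i` receives during execution `r`. -/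
def receivedCount (r : List (List (N × M))) (i : N) : ℕ :=
  (r.map fun c => c.countP fun p => decide (p.1 = i)).sum

/-- Number of items agent `i` gives during execution `r`. -/
def givenCount (r : List (List (N × M))) (i : N) : ℕ :=
  (r.map fun c => (gives c).countP fun p => decide (p.1 = i)).sum

/-- A static execution allocates each item at most once. -/
def StaticExec (r : List (List (N × M))) : Prop := (r.flatten.map Prod.snd).Nodup

/-- Agents of the reduction from 3D-matching: `ga t 0, ga t 1, ga t 2` are the
gadget agents `(xyz)₂, (xyz)₄, (xyz)₆` for the triple `t = (x,y,z)`; `ya y = y₂`,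
`za z = z₁`, `xa1 x = x₁`, `xa3 x = x₃`. -/
inductive RAg (n : ℕ) where
  | ga : (Fin n × Fin n × Fin n) → Fin 3 → RAg n
  | ya : Fin n → RAg n
  | za : Fin n → RAg n
  | xa1 : Fin n → RAg n
  | xa3 : Fin n → RAg n
deriving DecidableEq

/-- Items of the reduction: `gi t 0, gi t 1, gi t 2, gi t 3` are the gadget items
`(xyz)₁, (xyz)₃, (xyz)₅, (xyz)₇`; `yi y = y₁`, `zi z = z₂`, `xi x = x₂`. -/
inductive RIt (n : ℕ) where
  | gi : (Fin n × Fin n × Fin n) → Fin 4 → RIt n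
  | yi : Fin n → RIt n
  | zi : Fin n → RIt n
  | xi : Fin n → RIt n
deriving DecidableEq

/-- Supply sets of the reduction instance built from the triple set `T`. -/
def RS (n : ℕ) (T : Finset (Fin n × Fin n × Fin n)) : RAg n → Finset (RIt n)
  | .ga t i => if t ∈ T then {.gi t i.castSucc} else ∅
  | .ya y => {.yi y}
  | .za z => (T.filter fun t => t.2.2 = z).image fun t => .gi t 3
  | .xa1 _ => Finset.univ.image RIt.zi
  | .xa3 x => {.xi x}

/-- Demand sets of the reduction instance built from the triple set `T`. -/
def RD (n : ℕ) (T : Finset (Fin n × Fin n × Fin n)) : RAg n → Finset (RIt n)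
  | .ga t i =>
      if t ∈ T then
        (if i = 0 then {.gi t 1, .gi t 3}
         else if i = 1 then {.yi t.2.1}
         else {.gi t 3})
      else ∅
  | .ya y => (T.filter fun t => t.2.1 = y).image fun t => .gi t 2
  | .za z => {.zi z}
  | .xa1 x => {.xi x}
  | .xa3 x => (T.filter fun t => t.1 = x).image fun t => .gi t 0

/-- Whether a demand edge (agent receives item) belongs to the class
`E₀ = {(x₁, x₂)}`. -/
def isE0 {n : ℕ} : RAg n × RIt n → Bool
  | (.xa1 x, .xi x') => x == x'
  | _ => false

/-- Whether a demand edge belongs to the class `E₆ = {((xyz)₂, (xyz)₇)}`. -/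
def isE6 {n : ℕ} : RAg n × RIt n → Bool
  | (.ga t i, .gi t' j) => t == t' && i == 0 && j == 3
  | _ => false

/-- The number of large `X`-cycles in an execution: cycle steps using an `E₀` edge
but no `E₆` edge. -/
def numLarge {n : ℕ} (r : List (List (RAg n × RIt n))) : ℕ :=
  r.countP fun c => (c.countP isE0 != 0) && (c.countP isE6 == 0)

/-- The number of `Y`-cycles in an execution: cycle steps using no `E₀` edge. -/
def numY {n : ℕ} (r : List (List (RAg n × RIt n))) : ℕ :=
  r.countP fun c => c.countP isE0 == 0

/-- A set of triples is a partial 3D-matching: pairwise disjoint in each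
coordinate. -/
def IsPartialMatching {n : ℕ} (S : Finset (Fin n × Fin n × Fin n)) : Prop :=
  ∀ t ∈ S, ∀ t' ∈ S, t ≠ t' →
    t.1 ≠ t'.1 ∧ t.2.1 ≠ t'.2.1 ∧ t.2.2 ≠ t'.2.2

set_option linter.unusedSectionVars false
namespace S14

lemma gives_map_fst (c : List (N × M)) : (gives c).map Prod.fst = c.map Prod.fst := by
  apply List.map_fst_zip
  simp

lemma gives_map_snd (c : List (N × M)) :
    (gives c).map Prod.snd = (c.map Prod.snd).rotate (c.length - 1) := by
  rw [gives, List.map_snd_zip, List.map_rotate]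
  simp

lemma gives_snd_perm (c : List (N × M)) :
    ((gives c).map Prod.snd).Perm (c.map Prod.snd) := by
  rw [gives_map_snd]; exact List.rotate_perm _ _

def cnt {α : Type} [DecidableEq α] (l : List α) (a : α) : ℕ :=
  l.countP (fun x => decide (x = a))

lemma cnt_pos {α : Type} [DecidableEq α] {l : List α} {a : α} : 1 ≤ cnt l a ↔ a ∈ l := by
  rw [cnt, Nat.succ_le_iff, List.countP_pos_iff]
  simp

lemma cnt_eq_zero {α : Type} [DecidableEq α] {l : List α} {a : α} : cnt l a = 0 ↔ a ∉ l := by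
  rw [cnt, List.countP_eq_zero]
  constructor
  · intro h ha
    exact h a ha (by simp)
  · intro h b hb hba
    simp at hba
    subst hba
    exact h hb

lemma cnt_le_one_of_nodup {α : Type} [DecidableEq α] {l : List α} (h : l.Nodup) (a : α) :
    cnt l a ≤ 1 := by
  induction l with
  | nil => simp [cnt]
  | cons x l ih =>
    rw [List.nodup_cons] at h
    rw [cnt, List.countP_cons]
    by_cases hx : x = a
    · subst hx
      have h0 : cnt l x = 0 := cnt_eq_zero.2 h.1
      rw [cnt] at h0
      simp [h0]
    · have := ih h.2
      rw [cnt] at this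
      simp [hx]
      omega

lemma mem_own_step (s : TState N M) (c : List (N × M)) (i : N) (j : M) :
    j ∈ (stepCycle s c).own i ↔ (j ∈ s.own i ∧ (i, j) ∉ gives c) ∨ (i, j) ∈ c := by
  simp only [stepCycle, Finset.mem_union, Finset.mem_filter, List.mem_toFinset, List.mem_map,
    List.mem_filter]
  constructor
  · rintro (⟨h1, h2⟩ | ⟨p, ⟨hp, hp1⟩, hp2⟩)
    · exact Or.inl ⟨h1, by simpa using h2⟩
    · right; simp at hp1; cases p; simp_all
  · rintro (⟨h1, h2⟩ | h)
    · exact Or.inl ⟨h1, by simpa using h2⟩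
    · exact Or.inr ⟨(i, j), ⟨h, by simp⟩, rfl⟩

lemma mem_dem_step (s : TState N M) (c : List (N × M)) (i : N) (j : M) :
    j ∈ (stepCycle s c).dem i ↔ j ∈ s.dem i ∧ (i, j) ∉ c := by
  simp [stepCycle]

def GInv (O D : N → Finset M) (s : TState N M) : Prop :=
  (∀ i, s.dem i ⊆ D i) ∧ (∀ i, s.own i ⊆ O i ∪ D i) ∧ ∀ i j, j ∈ s.own i → j ∉ s.dem i

variable {O D : N → Finset M}

lemma GInv_init (h : ∀ i j, j ∈ O i → j ∉ D i) : GInv O D ⟨O, D⟩ :=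
  ⟨fun _ => le_refl _, fun _ => Finset.subset_union_left, h⟩

lemma recv_give_false {s : TState N M} {c : List (N × M)} (hI : GInv O D s)
    (hv : ValidCycle s c) {i : N} {j : M} (h1 : (i, j) ∈ c) (h2 : (i, j) ∈ gives c) : False :=
  hI.2.2 i j (hv.2.2.2.2 _ h2) (hv.2.2.2.1 _ h1)

lemma GInv_step {s : TState N M} {c : List (N × M)} (hI : GInv O D s) (hv : ValidCycle s c) :
    GInv O D (stepCycle s c) := by
  refine ⟨fun i j hj => ?_, fun i j hj => ?_, fun i j hj => ?_⟩
  · rw [mem_dem_step] at hj; exact hI.1 i hj.1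
  · rw [mem_own_step] at hj
    rcases hj with ⟨h, _⟩ | h
    · exact hI.2.1 i h
    · exact Finset.mem_union_right _ (hI.1 i (hv.2.2.2.1 _ h))
  · rw [mem_own_step] at hj
    rw [mem_dem_step]
    rintro ⟨hd, hnc⟩
    rcases hj with ⟨h, _⟩ | h
    · exact hI.2.2 i j h hd
    · exact hnc h


-- C-lemmas
variable {s : TState N M} {c : List (N × M)} {i : N} {j : M}

lemma exists_give_item (hI : GInv O D s) (hv : ValidCycle s c) (h : (i, j) ∈ c) :
    ∃ j', j' ≠ j ∧ (i, j') ∈ gives c ∧ j' ∈ s.own i := by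
  have hi : i ∈ (gives c).map Prod.fst := by
    rw [gives_map_fst]; exact List.mem_map.2 ⟨(i, j), h, rfl⟩
  obtain ⟨⟨i', j'⟩, hp, rfl⟩ := List.mem_map.1 hi
  refine ⟨j', fun e => ?_, hp, hv.2.2.2.2 _ hp⟩
  subst e; exact recv_give_false hI hv h hp

lemma exists_recv_item (hI : GInv O D s) (hv : ValidCycle s c) (h : (i, j) ∈ gives c) :
    ∃ j', j' ≠ j ∧ (i, j') ∈ c ∧ j' ∈ s.dem i := by
  have hi : i ∈ c.map Prod.fst := by
    rw [← gives_map_fst]; exact List.mem_map.2 ⟨(i, j), h, rfl⟩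
  obtain ⟨⟨i', j'⟩, hp, rfl⟩ := List.mem_map.1 hi
  refine ⟨j', fun e => ?_, hp, hv.2.2.2.1 _ hp⟩
  subst e; exact recv_give_false hI hv hp h

lemma exists_giver (hI : GInv O D s) (hv : ValidCycle s c) (h : (i, j) ∈ c) :
    ∃ i', i' ≠ i ∧ (i', j) ∈ gives c ∧ j ∈ s.own i' := by
  have hj : j ∈ (gives c).map Prod.snd := by
    rw [(gives_snd_perm c).mem_iff]; exact List.mem_map.2 ⟨(i, j), h, rfl⟩
  obtain ⟨⟨i', j'⟩, hp, rfl⟩ := List.mem_map.1 hj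
  refine ⟨i', fun e => ?_, hp, hv.2.2.2.2 _ hp⟩
  subst e; exact recv_give_false hI hv h hp

lemma exists_recver (hI : GInv O D s) (hv : ValidCycle s c) (h : (i, j) ∈ gives c) :
    ∃ i', i' ≠ i ∧ (i', j) ∈ c ∧ j ∈ s.dem i' := by
  have hj : j ∈ c.map Prod.snd := by
    rw [← (gives_snd_perm c).mem_iff]; exact List.mem_map.2 ⟨(i, j), h, rfl⟩
  obtain ⟨⟨i', j'⟩, hp, rfl⟩ := List.mem_map.1 hj
  refine ⟨i', fun e => ?_, hp, hv.2.2.2.1 _ hp⟩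
  subst e; exact recv_give_false hI hv hp h

-- count lemmas
lemma count_le_count_fst (c : List (N × M)) (i : N) (j : M) :
    cnt c (i, j) ≤ cnt (c.map Prod.fst) i := by
  rw [cnt, cnt, List.countP_map]
  apply List.countP_mono_left
  intro p _ h
  simp at h ⊢
  simp [h]

lemma count_le_count_snd (c : List (N × M)) (i : N) (j : M) :
    cnt c (i, j) ≤ cnt (c.map Prod.snd) j := by
  rw [cnt, cnt, List.countP_map]
  apply List.countP_mono_left
  intro p _ h
  simp at h ⊢
  simp [h]

lemma count_c_le_one (hv : ValidCycle s c) (i : N) (j : M) : cnt c (i, j) ≤ 1 :=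
  (count_le_count_fst c i j).trans (cnt_le_one_of_nodup hv.2.1 i)

lemma gives_fst_nodup (hv : ValidCycle s c) : ((gives c).map Prod.fst).Nodup := by
  rw [gives_map_fst]; exact hv.2.1

lemma gives_snd_nodup (hv : ValidCycle s c) : ((gives c).map Prod.snd).Nodup :=
  (gives_snd_perm c).nodup_iff.2 hv.2.2.1

lemma count_gives_le_one (hv : ValidCycle s c) (i : N) (j : M) : cnt (gives c) (i, j) ≤ 1 :=
  (count_le_count_fst (gives c) i j).trans
    (cnt_le_one_of_nodup (gives_fst_nodup hv) i)

lemma count_pos_of_mem {α : Type} [DecidableEq α] {l : List α} {p : α} (h : p ∈ l) :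
    1 ≤ cnt l p := cnt_pos.2 h

lemma mem_of_count_pos {α : Type} [DecidableEq α] {l : List α} {p : α} (h : 1 ≤ cnt l p) :
    p ∈ l := cnt_pos.1 h

-- transport
lemma exec_sum_le (g h : List (N × M) → ℕ)
    (H : ∀ s c, GInv O D s → ValidCycle s c → g c ≤ h c) :
    ∀ (r : List (List (N × M))) (s : TState N M), GInv O D s → ValidExec s r →
      (r.map g).sum ≤ (r.map h).sum := by
  intro r
  induction r with
  | nil => intro s _ _; simp
  | cons c r ih =>
    intro s hI hr
    obtain ⟨h1, h2⟩ := hr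
    simpa using Nat.add_le_add (H s c hI h1) (ih _ (GInv_step hI h1) h2)

-- capacity: receives
lemma cap_recv (i : N) (j : M) :
    ∀ (r : List (List (N × M))) (s : TState N M), ValidExec s r →
      (r.map fun c => cnt c (i, j)).sum ≤ if j ∈ s.dem i then 1 else 0 := by
  intro r
  induction r with
  | nil => intro s _; simp
  | cons c r ih =>
    intro s hr
    obtain ⟨h1, h2⟩ := hr
    have hrec := ih _ h2
    simp only [List.map_cons, List.sum_cons]
    by_cases hm : (i, j) ∈ c
    · have hd : j ∈ s.dem i := h1.2.2.2.1 _ hm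
      have : j ∉ (stepCycle s c).dem i := by rw [mem_dem_step]; tauto
      rw [if_neg this] at hrec
      have := count_c_le_one h1 i j
      simp only [if_pos hd]
      omega
    · have h0 : cnt c (i, j) = 0 := cnt_eq_zero.2 hm
      have : (j ∈ (stepCycle s c).dem i) ↔ j ∈ s.dem i := by rw [mem_dem_step]; tauto
      rw [h0]
      simp only [this] at hrec
      omega

-- capacity: gives
lemma cap_give (i : N) (j : M) :
    ∀ (r : List (List (N × M))) (s : TState N M), GInv O D s → ValidExec s r →
      (r.map fun c => cnt (gives c) (i, j)).sum ≤
        (if j ∈ s.own i then 1 else 0) + (r.map fun c => cnt c (i, j)).sum := by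
  intro r
  induction r with
  | nil => intro s _ _; simp
  | cons c r ih =>
    intro s hI hr
    obtain ⟨h1, h2⟩ := hr
    have hrec := ih _ (GInv_step hI h1) h2
    simp only [List.map_cons, List.sum_cons]
    by_cases hg : (i, j) ∈ gives c
    · have ho : j ∈ s.own i := h1.2.2.2.2 _ hg
      have hnc : (i, j) ∉ c := fun hc => recv_give_false hI h1 hc hg
      have : j ∉ (stepCycle s c).own i := by rw [mem_own_step]; tauto
      rw [if_neg this] at hrec
      have hc0 : cnt c (i, j) = 0 := cnt_eq_zero.2 hnc
      have := count_gives_le_one h1 i j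
      rw [if_pos ho, hc0]
      omega
    · have h0 : cnt (gives c) (i, j) = 0 := cnt_eq_zero.2 hg
      rw [h0]
      by_cases hc : (i, j) ∈ c
      · have : j ∈ (stepCycle s c).own i := by rw [mem_own_step]; tauto
        rw [if_pos this] at hrec
        have := count_pos_of_mem hc
        split_ifs <;> omega
      · have : (j ∈ (stepCycle s c).own i) ↔ j ∈ s.own i := by
          rw [mem_own_step]; tauto
        have hc0 : cnt c (i, j) = 0 := cnt_eq_zero.2 hc
        rw [hc0]
        simp only [this] at hrec
        omega

-- coverage: every received pair is an initial demand edge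
lemma exec_mem_dem :
    ∀ (r : List (List (N × M))) (s : TState N M), ValidExec s r →
      ∀ p ∈ r.flatten, p.2 ∈ s.dem p.1 := by
  intro r
  induction r with
  | nil => intro s _ p hp; simp at hp
  | cons c r ih =>
    intro s hr p hp
    obtain ⟨h1, h2⟩ := hr
    rw [List.flatten_cons, List.mem_append] at hp
    rcases hp with h | h
    · exact h1.2.2.2.1 _ h
    · have := ih _ h2 p h
      rw [mem_dem_step] at this
      exact this.1


variable {n : ℕ} {T : Finset (Fin n × Fin n × Fin n)}

@[simp] lemma castSucc_ne_three (i : Fin 3) : (i.castSucc : Fin 4) ≠ 3 := by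
  have := i.isLt
  intro h
  have : (i.castSucc : Fin 4).val = (3 : Fin 4).val := by rw [h]
  simp [Fin.coe_castSucc] at this
  omega

lemma fin3cases (i : Fin 3) : i = 0 ∨ i = 1 ∨ i = 2 := by omega

-- disjointness of supply and demand
lemma RS_RD_disj : ∀ (i : RAg n) (j : RIt n), j ∈ RS n T i → j ∉ RD n T i := by
  intro i j hS hD
  rcases i with ⟨t, k⟩ | y | z | x | x
  · rcases fin3cases k with rfl | rfl | rfl <;>
      simp_all [RS, RD] <;> split_ifs at hS hD <;> simp_all <;> omega
  · simp [RS] at hS; subst hS; simp [RD] at hD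
  · simp [RD] at hD; subst hD; simp [RS] at hS
  · simp [RD] at hD; subst hD; simp [RS] at hS
  · simp [RS] at hS; subst hS; simp [RD] at hD

-- demander characterizations
lemma dem_gi0 {t} {i : RAg n} (h : RIt.gi t 0 ∈ RD n T i) : i = .xa3 t.1 := by
  rcases i with ⟨t', k⟩ | y | z | x | x <;> simp [RD] at h
  · rcases fin3cases k with rfl | rfl | rfl <;> split_ifs at h <;> simp_all <;> simp [Fin.ext_iff] at h
  · simp [h.2]

lemma dem_gi1 {t} {i : RAg n} (h : RIt.gi t 1 ∈ RD n T i) : i = .ga t 0 := by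
  rcases i with ⟨t', k⟩ | y | z | x | x <;> simp [RD] at h
  rcases fin3cases k with rfl | rfl | rfl <;> split_ifs at h <;> simp_all <;> simp [Fin.ext_iff] at h

lemma dem_gi2 {t} {i : RAg n} (h : RIt.gi t 2 ∈ RD n T i) : i = .ya t.2.1 := by
  rcases i with ⟨t', k⟩ | y | z | x | x <;> simp [RD] at h
  · rcases fin3cases k with rfl | rfl | rfl <;> split_ifs at h <;> simp_all <;> simp [Fin.ext_iff] at h
  · simp [h.2]

lemma dem_gi3 {t} {i : RAg n} (h : RIt.gi t 3 ∈ RD n T i) : i = .ga t 0 ∨ i = .ga t 2 := by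
  rcases i with ⟨t', k⟩ | y | z | x | x <;> simp [RD] at h
  rcases fin3cases k with rfl | rfl | rfl <;> split_ifs at h <;> simp_all

lemma dem_yi {y} {i : RAg n} (h : RIt.yi y ∈ RD n T i) :
    ∃ t', t' ∈ T ∧ t'.2.1 = y ∧ i = .ga t' 1 := by
  rcases i with ⟨t', k⟩ | y' | z | x | x <;> simp [RD] at h
  rcases fin3cases k with rfl | rfl | rfl <;> split_ifs at h <;> simp_all

lemma dem_zi {z} {i : RAg n} (h : RIt.zi z ∈ RD n T i) : i = .za z := by
  rcases i with ⟨t', k⟩ | y' | z' | x | x <;> simp [RD] at h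
  · rcases fin3cases k with rfl | rfl | rfl <;> split_ifs at h <;> simp_all
  · simp [h]

lemma dem_xi {x} {i : RAg n} (h : RIt.xi x ∈ RD n T i) : i = .xa1 x := by
  rcases i with ⟨t', k⟩ | y' | z' | x' | x' <;> simp [RD] at h
  · rcases fin3cases k with rfl | rfl | rfl <;> split_ifs at h <;> simp_all
  · simp [h]

-- owner characterizations
lemma own_gi0 {t} {i : RAg n} (h : RIt.gi t 0 ∈ RS n T i ∪ RD n T i) :
    i = .ga t 0 ∨ i = .xa3 t.1 := by
  rcases Finset.mem_union.1 h with h | h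
  · rcases i with ⟨t', k⟩ | y | z | x | x <;> simp [RS] at h <;>
      rcases fin3cases k with rfl | rfl | rfl <;>
      split_ifs at h <;> simp_all [Fin.ext_iff]
  · exact Or.inr (dem_gi0 h)

lemma own_gi1 {t} {i : RAg n} (h : RIt.gi t 1 ∈ RS n T i ∪ RD n T i) :
    i = .ga t 1 ∨ i = .ga t 0 := by
  rcases Finset.mem_union.1 h with h | h
  · rcases i with ⟨t', k⟩ | y | z | x | x <;> simp [RS] at h <;>
      rcases fin3cases k with rfl | rfl | rfl <;>
      split_ifs at h <;> simp_all [Fin.ext_iff]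
  · exact Or.inr (dem_gi1 h)

lemma own_gi2 {t} {i : RAg n} (h : RIt.gi t 2 ∈ RS n T i ∪ RD n T i) :
    i = .ga t 2 ∨ i = .ya t.2.1 := by
  rcases Finset.mem_union.1 h with h | h
  · rcases i with ⟨t', k⟩ | y | z | x | x <;> simp [RS] at h <;>
      rcases fin3cases k with rfl | rfl | rfl <;>
      split_ifs at h <;> simp_all [Fin.ext_iff]
  · exact Or.inr (dem_gi2 h)

lemma own_gi3 {t} {i : RAg n} (h : RIt.gi t 3 ∈ RS n T i ∪ RD n T i) :
    i = .za t.2.2 ∨ i = .ga t 0 ∨ i = .ga t 2 := by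
  rcases Finset.mem_union.1 h with h | h
  · rcases i with ⟨t', k⟩ | y | z | x | x <;> simp [RS] at h
    · rcases fin3cases k with rfl | rfl | rfl <;>
        split_ifs at h <;> simp_all [Fin.ext_iff] <;> omega
    · left; rw [← h.2]
  · exact Or.inr (dem_gi3 h)

lemma own_yi {y} {i : RAg n} (h : RIt.yi y ∈ RS n T i ∪ RD n T i) :
    i = .ya y ∨ ∃ t', t' ∈ T ∧ t'.2.1 = y ∧ i = .ga t' 1 := by
  rcases Finset.mem_union.1 h with h | h
  · rcases i with ⟨t', k⟩ | y' | z | x | x <;> simp [RS] at h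
    · rcases fin3cases k with rfl | rfl | rfl <;> split_ifs at h <;> simp_all
    · simp [h]
  · exact Or.inr (dem_yi h)

lemma own_xi {x} {i : RAg n} (h : RIt.xi x ∈ RS n T i ∪ RD n T i) :
    i = .xa3 x ∨ i = .xa1 x := by
  rcases Finset.mem_union.1 h with h | h
  · rcases i with ⟨t', k⟩ | y' | z | x' | x' <;> simp [RS] at h
    · rcases fin3cases k with rfl | rfl | rfl <;> split_ifs at h <;> simp_all
    · simp [h]
  · exact Or.inr (dem_xi h)

-- agent-side characterizations
lemma demself_ga0 {t} {j : RIt n} (h : j ∈ RD n T (.ga t 0)) :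
    j = .gi t 1 ∨ j = .gi t 3 := by
  simp [RD] at h; split_ifs at h <;> simp_all

lemma demself_ga1 {t} {j : RIt n} (h : j ∈ RD n T (.ga t 1)) : j = .yi t.2.1 := by
  simp [RD] at h; split_ifs at h <;> simp_all

lemma demself_ga2 {t} {j : RIt n} (h : j ∈ RD n T (.ga t 2)) : j = .gi t 3 := by
  simp [RD] at h; split_ifs at h <;> simp_all [Fin.ext_iff]

lemma demself_ya {y} {j : RIt n} (h : j ∈ RD n T (.ya y)) :
    ∃ t', t' ∈ T ∧ t'.2.1 = y ∧ j = .gi t' 2 := by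
  simp [RD] at h
  obtain ⟨a, b, hT, hj⟩ := h
  exact ⟨_, hT, rfl, hj.symm⟩

lemma demself_za {z} {j : RIt n} (h : j ∈ RD n T (.za z)) : j = .zi z := by
  simpa [RD] using h

lemma demself_xa1 {x} {j : RIt n} (h : j ∈ RD n T (.xa1 x)) : j = .xi x := by
  simpa [RD] using h

lemma demself_xa3 {x} {j : RIt n} (h : j ∈ RD n T (.xa3 x)) :
    ∃ t', t' ∈ T ∧ t'.1 = x ∧ j = .gi t' 0 := by
  simp [RD] at h
  obtain ⟨a, b, hT, hj⟩ := h
  exact ⟨_, hT, rfl, hj.symm⟩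

lemma ownself_ga0 {t} {j : RIt n} (h : j ∈ RS n T (.ga t 0) ∪ RD n T (.ga t 0)) :
    j = .gi t 0 ∨ j = .gi t 1 ∨ j = .gi t 3 := by
  rcases Finset.mem_union.1 h with h | h
  · simp [RS] at h; split_ifs at h <;> simp_all
  · exact Or.inr (demself_ga0 h)

lemma ownself_ga1 {t} {j : RIt n} (h : j ∈ RS n T (.ga t 1) ∪ RD n T (.ga t 1)) :
    j = .gi t 1 ∨ j = .yi t.2.1 := by
  rcases Finset.mem_union.1 h with h | h
  · simp [RS] at h; split_ifs at h <;> simp_all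
  · exact Or.inr (demself_ga1 h)

lemma ownself_xa3 {x} {j : RIt n} (h : j ∈ RS n T (.xa3 x) ∪ RD n T (.xa3 x)) :
    j = .xi x ∨ ∃ t', t' ∈ T ∧ t'.1 = x ∧ j = .gi t' 0 := by
  rcases Finset.mem_union.1 h with h | h
  · simp [RS] at h; simp [h]
  · exact Or.inr (demself_xa3 h)

-- per-cycle machinery
abbrev RInv (n : ℕ) (T : Finset (Fin n × Fin n × Fin n)) :
    TState (RAg n) (RIt n) → Prop := GInv (RS n T) (RD n T)

variable {s : TState (RAg n) (RIt n)} {c : List (RAg n × RIt n)}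

lemma cnt_imp {α : Type} [DecidableEq α] {l l' : List α} {p q : α}
    (h1 : cnt l p ≤ 1) (h : p ∈ l → q ∈ l') : cnt l p ≤ cnt l' q := by
  by_cases hp : p ∈ l
  · exact h1.trans (count_pos_of_mem (h hp))
  · rw [cnt_eq_zero.2 hp]; omega

lemma sum_count_le {α : Type} [DecidableEq α] (F : Finset α)
    (f : α → RAg n × RIt n) (l l' : List (RAg n × RIt n)) (key : RAg n × RIt n)
    (hinj : ∀ a ∈ F, ∀ b ∈ F, f a = f b → a = b)
    (huniq : ∀ a ∈ F, ∀ b ∈ F, f a ∈ l → f b ∈ l → f a = f b)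
    (hone : ∀ a ∈ F, cnt l (f a) ≤ 1)
    (himp : ∀ a ∈ F, f a ∈ l → key ∈ l') :
    (∑ a ∈ F, cnt l (f a)) ≤ cnt l' key := by
  by_cases hex : ∃ a ∈ F, f a ∈ l
  · obtain ⟨a₀, ha₀, hm⟩ := hex
    have : (∑ a ∈ F, cnt l (f a)) = cnt l (f a₀) := by
      apply Finset.sum_eq_single_of_mem a₀ ha₀
      intro b hb hne
      rw [cnt_eq_zero]
      intro hbl
      exact hne (hinj b hb a₀ ha₀ (huniq b hb a₀ ha₀ hbl hm))
    rw [this]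
    exact (hone a₀ ha₀).trans (count_pos_of_mem (himp a₀ ha₀ hm))
  · push_neg at hex
    rw [Finset.sum_eq_zero fun a ha => cnt_eq_zero.2 (hex a ha)]
    omega

lemma snd_uniq (hv : ValidCycle s c) {i i' : RAg n} {j : RIt n}
    (h1 : (i, j) ∈ c) (h2 : (i', j) ∈ c) : i = i' := by
  exact (Prod.ext_iff.1 (List.inj_on_of_nodup_map hv.2.2.1 h1 h2 rfl)).1

lemma fst_uniq (hv : ValidCycle s c) {i : RAg n} {j j' : RIt n}
    (h1 : (i, j) ∈ c) (h2 : (i, j') ∈ c) : j = j' := by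
  exact (Prod.ext_iff.1 (List.inj_on_of_nodup_map hv.2.1 h1 h2 rfl)).2

lemma gives_fst_uniq (hv : ValidCycle s c) {i : RAg n} {j j' : RIt n}
    (h1 : (i, j) ∈ gives c) (h2 : (i, j') ∈ gives c) : j = j' := by
  exact (Prod.ext_iff.1 (List.inj_on_of_nodup_map (gives_fst_nodup hv) h1 h2 rfl)).2

-- PC lemmas
variable (hI : RInv n T s) (hv : ValidCycle s c)
include hI hv

lemma pc1 {t} (ht : t ∈ T) :
    cnt c (.ga t 0, .gi t 1) ≤ cnt c (.ga t 1, .yi t.2.1) := by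
  apply cnt_imp (count_c_le_one hv _ _)
  intro h
  obtain ⟨i', hne, hg, hown⟩ := exists_giver hI hv h
  rcases own_gi1 (hI.2.1 _ hown) with rfl | h' 
  · obtain ⟨j', _, hc', hdem⟩ := exists_recv_item hI hv hg
    rwa [demself_ga1 (hI.1 _ hdem)] at hc'
  · exact absurd h' hne

lemma pc2 {t} (ht : t ∈ T) :
    cnt c (.ya t.2.1, .gi t 2) ≤ cnt c (.ga t 2, .gi t 3) := by
  apply cnt_imp (count_c_le_one hv _ _)
  intro h
  obtain ⟨i', hne, hg, hown⟩ := exists_giver hI hv h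
  rcases own_gi2 (hI.2.1 _ hown) with rfl | h'
  · obtain ⟨j', _, hc', hdem⟩ := exists_recv_item hI hv hg
    rwa [demself_ga2 (hI.1 _ hdem)] at hc'
  · exact absurd h' hne

lemma pc3 {t} (ht : t ∈ T) :
    cnt c (.ga t 0, .gi t 3) ≤ cnt c (.xa3 t.1, .gi t 0) := by
  apply cnt_imp (count_c_le_one hv _ _)
  intro h
  obtain ⟨j', hne, hg, hown⟩ := exists_give_item hI hv h
  rcases ownself_ga0 (hI.2.1 _ hown) with rfl | rfl | rfl
  · obtain ⟨i'', hne'', hc'', hdem''⟩ := exists_recver hI hv hg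
    rwa [dem_gi0 (hI.1 _ hdem'')] at hc''
  · obtain ⟨i'', hne'', hc'', hdem''⟩ := exists_recver hI hv hg
    exact absurd (dem_gi1 (hI.1 _ hdem'')) hne''
  · exact absurd rfl hne

lemma pc4 {t} (ht : t ∈ T) :
    cnt c (.ga t 0, .gi t 3) ≤ cnt (gives c) (.za t.2.2, .gi t 3) := by
  apply cnt_imp (count_c_le_one hv _ _)
  intro h
  obtain ⟨i', hne, hg, hown⟩ := exists_giver hI hv h
  rcases own_gi3 (hI.2.1 _ hown) with rfl | h' | rfl
  · exact hg
  · exact absurd h' hne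
  · obtain ⟨j', hne', hc', hdem⟩ := exists_recv_item hI hv hg
    exact absurd (demself_ga2 (hI.1 _ hdem)) hne'

lemma pc5 {t} (ht : t ∈ T) :
    cnt c (.ga t 2, .gi t 3) + cnt c (.ga t 0, .gi t 3) ≤
      cnt (gives c) (.za t.2.2, .gi t 3) + cnt (gives c) (.ga t 0, .gi t 3) := by
  by_cases h2 : ((.ga t 2 : RAg n), (.gi t 3 : RIt n)) ∈ c
  · have h0 : ((.ga t 0 : RAg n), (.gi t 3 : RIt n)) ∉ c := by
      intro h0
      exact absurd (snd_uniq hv h2 h0) (by simp)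
    rw [cnt_eq_zero.2 h0]
    obtain ⟨i', hne, hg, hown⟩ := exists_giver hI hv h2
    have hrhs : 1 ≤ cnt (gives c) (.za t.2.2, .gi t 3) + cnt (gives c) (.ga t 0, .gi t 3) := by
      rcases own_gi3 (hI.2.1 _ hown) with rfl | rfl | h'
      · have := count_pos_of_mem hg; omega
      · have := count_pos_of_mem hg; omega
      · exact absurd h' hne
    have := count_c_le_one hv (RAg.ga t 2) (RIt.gi t 3)
    omega
  · rw [cnt_eq_zero.2 h2]
    have := pc4 hI hv ht
    omega

lemma pc6 {t} (ht : t ∈ T) :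
    cnt c (.ga t 0, .gi t 1) ≤
      cnt c (.xa3 t.1, .gi t 0) + cnt (gives c) (.ga t 0, .gi t 3) := by
  have h1 := count_c_le_one hv (RAg.ga t 0) (RIt.gi t 1)
  by_cases h : ((.ga t 0 : RAg n), (.gi t 1 : RIt n)) ∈ c
  · obtain ⟨j', hne, hg, hown⟩ := exists_give_item hI hv h
    rcases ownself_ga0 (hI.2.1 _ hown) with rfl | rfl | rfl
    · obtain ⟨i'', hne'', hc'', hdem''⟩ := exists_recver hI hv hg
      rw [dem_gi0 (hI.1 _ hdem'')] at hc''
      have := count_pos_of_mem hc''; omega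
    · exact absurd rfl hne
    · have := count_pos_of_mem hg; omega
  · rw [cnt_eq_zero.2 h]; omega

lemma pc7 (y : Fin n) :
    (∑ t ∈ T.filter (fun t => t.2.1 = y), cnt c (.ga t 1, .yi y)) ≤
      cnt (gives c) (.ya y, .yi y) := by
  apply sum_count_le _ (fun t => ((.ga t 1 : RAg n), (.yi y : RIt n)))
  · intro a _ b _ h; simpa using h
  · intro a _ b _ ha hb; rw [snd_uniq hv ha hb]
  · intro a _; exact count_c_le_one hv _ _
  · intro a ha hm
    obtain ⟨i', hne, hg, hown⟩ := exists_giver hI hv hm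
    rcases own_yi (hI.2.1 _ hown) with rfl | ⟨t', _, hy', rfl⟩
    · exact hg
    · obtain ⟨j', hne', hc', hdem⟩ := exists_recv_item hI hv hg
      rw [demself_ga1 (hI.1 _ hdem), hy'] at hne'
      exact absurd rfl hne'

lemma pc8 (x : Fin n) :
    (∑ t ∈ T.filter (fun t => t.1 = x), cnt c (.xa3 x, .gi t 0)) ≤
      cnt (gives c) (.xa3 x, .xi x) := by
  apply sum_count_le _ (fun t => ((.xa3 x : RAg n), (.gi t 0 : RIt n)))
  · intro a _ b _ h; simpa using h
  · intro a _ b _ ha hb; rw [fst_uniq hv ha hb]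
  · intro a _; exact count_c_le_one hv _ _
  · intro a ha hm
    obtain ⟨j', hne, hg, hown⟩ := exists_give_item hI hv hm
    rcases ownself_xa3 (hI.2.1 _ hown) with rfl | ⟨t', ht', hx', rfl⟩
    · exact hg
    · obtain ⟨i'', hne'', hc'', hdem''⟩ := exists_recver hI hv hg
      rw [dem_gi0 (hI.1 _ hdem''), hx'] at hne''
      exact absurd rfl hne''

lemma pc9 (z : Fin n) :
    (∑ t ∈ T.filter (fun t => t.2.2 = z), cnt (gives c) (.za z, .gi t 3)) ≤
      cnt c (.za z, .zi z) := by
  apply sum_count_le _ (fun t => ((.za z : RAg n), (.gi t 3 : RIt n)))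
  · intro a _ b _ h; simpa using h
  · intro a _ b _ ha hb; rw [gives_fst_uniq hv ha hb]
  · intro a _; exact count_gives_le_one hv _ _
  · intro a ha hm
    obtain ⟨j', hne, hc', hdem⟩ := exists_recv_item hI hv hm
    rwa [demself_za (hI.1 _ hdem)] at hc'

omit hI hv

-- exec-level quantities
def Rv (r : List (List (N × M))) (p : N × M) : ℕ := (r.map fun c => cnt c p).sum
def Gv (r : List (List (N × M))) (p : N × M) : ℕ := (r.map fun c => cnt (gives c) p).sum

lemma listsum_swap {α : Type} (F : Finset α) (g : α → List (N × M) → ℕ)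
    (r : List (List (N × M))) :
    (r.map (fun c => ∑ a ∈ F, g a c)).sum = ∑ a ∈ F, (r.map (g a)).sum := by
  induction r with
  | nil => simp
  | cons c r ih => simp [ih, Finset.sum_add_distrib]

lemma length_eq_sum_cnt {α : Type} [DecidableEq α] (E : Finset α) :
    ∀ (l : List α), (∀ p ∈ l, p ∈ E) → l.length = ∑ p ∈ E, cnt l p := by
  intro l
  induction l with
  | nil => simp [cnt]
  | cons x l ih =>
    intro h
    have hcnt : ∀ p, cnt (x :: l) p = cnt l p + if x = p then 1 else 0 := by
      intro p
      rw [cnt, cnt, List.countP_cons]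
      simp
    rw [Finset.sum_congr rfl (fun p _ => hcnt p), Finset.sum_add_distrib]
    rw [Finset.sum_ite_eq E x (fun _ => 1), if_pos (h x (by simp))]
    rw [← ih (fun p hp => h p (by simp [hp]))]
    simp [Nat.add_comm]

lemma exchanges_eq_sum (E : Finset (N × M)) :
    ∀ (r : List (List (N × M))), (∀ p ∈ r.flatten, p ∈ E) →
      exchanges r = ∑ p ∈ E, Rv r p := by
  intro r
  induction r with
  | nil => simp [exchanges, Rv]
  | cons c r ih =>
    intro h
    have hc : ∀ p ∈ c, p ∈ E := fun p hp => h p (by simp [hp])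
    have hr : ∀ p ∈ r.flatten, p ∈ E := fun p hp => h p (by simp [hp])
    have : exchanges (c :: r) = c.length + exchanges r := by simp [exchanges]
    rw [this, ih hr, length_eq_sum_cnt E c hc, ← Finset.sum_add_distrib]
    apply Finset.sum_congr rfl
    intro p _
    simp [Rv]

-- the demand-edge finset
def egad (t : Fin n × Fin n × Fin n) : Finset (RAg n × RIt n) :=
  {(.ga t 0, .gi t 1), (.ga t 0, .gi t 3), (.ga t 1, .yi t.2.1),
   (.ga t 2, .gi t 3), (.ya t.2.1, .gi t 2), (.xa3 t.1, .gi t 0)}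

def EE (n : ℕ) (T : Finset (Fin n × Fin n × Fin n)) : Finset (RAg n × RIt n) :=
  (T.biUnion egad) ∪
    ((Finset.univ.image fun z => ((.za z : RAg n), (.zi z : RIt n))) ∪
     (Finset.univ.image fun x => ((.xa1 x : RAg n), (.xi x : RIt n))))

lemma dem_ga_T {t k} {j : RIt n} (h : j ∈ RD n T (.ga t k)) : t ∈ T := by
  by_cases h' : t ∈ T
  · exact h'
  · exfalso; simp [RD, h'] at h

lemma cover_EE {p : RAg n × RIt n} (h : p.2 ∈ RD n T p.1) : p ∈ EE n T := by
  obtain ⟨i, j⟩ := p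
  replace h : j ∈ RD n T i := h
  simp only [EE, Finset.mem_union, Finset.mem_biUnion]
  rcases i with ⟨t, k⟩ | y | z | x | x
  · have ht := dem_ga_T (T := T) h
    left
    refine ⟨t, ht, ?_⟩
    rcases fin3cases k with rfl | rfl | rfl
    · rcases demself_ga0 h with rfl | rfl <;> simp [egad]
    · rw [demself_ga1 h]; simp [egad]
    · rw [demself_ga2 h]; simp [egad]
  · obtain ⟨t', ht', hy, rfl⟩ := demself_ya h
    left
    exact ⟨t', ht', by rw [← hy]; simp [egad]⟩
  · rw [demself_za h]; right; left; simp
  · rw [demself_xa1 h]; right; right; simp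
  · obtain ⟨t', ht', hx, rfl⟩ := demself_xa3 h
    left
    exact ⟨t', ht', by rw [← hx]; simp [egad]⟩

lemma sum_egad (t : Fin n × Fin n × Fin n) (f : RAg n × RIt n → ℕ) :
    ∑ p ∈ egad t, f p =
      f (.ga t 0, .gi t 1) + f (.ga t 0, .gi t 3) + f (.ga t 1, .yi t.2.1) +
      f (.ga t 2, .gi t 3) + f (.ya t.2.1, .gi t 2) + f (.xa3 t.1, .gi t 0) := by
  rw [egad]
  rw [Finset.sum_insert (by simp [Fin.ext_iff]), Finset.sum_insert (by simp [Fin.ext_iff]),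
    Finset.sum_insert (by simp [Fin.ext_iff]), Finset.sum_insert (by simp [Fin.ext_iff]),
    Finset.sum_insert (by simp [Fin.ext_iff]), Finset.sum_singleton]
  ring

lemma sum_EE (f : RAg n × RIt n → ℕ) :
    ∑ p ∈ EE n T, f p =
      (∑ t ∈ T, (f (.ga t 0, .gi t 1) + f (.ga t 0, .gi t 3) + f (.ga t 1, .yi t.2.1) +
        f (.ga t 2, .gi t 3) + f (.ya t.2.1, .gi t 2) + f (.xa3 t.1, .gi t 0))) +
      ((∑ z, f (.za z, .zi z)) + (∑ x, f (.xa1 x, .xi x))) := by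
  rw [EE, Finset.sum_union, Finset.sum_union, Finset.sum_biUnion]
  · rw [Finset.sum_image (by intro a _ b _ h; simpa using h),
      Finset.sum_image (by intro a _ b _ h; simpa using h)]
    congr 1
    exact Finset.sum_congr rfl fun t _ => sum_egad t f
  · -- pairwise disjoint egad
    intro a _ b _ hab
    simp only [Function.onFun]
    rw [Finset.disjoint_left]
    intro p hp hq
    simp [egad, Prod.ext_iff] at hp hq
    rcases hp with h|h|h|h|h|h <;> rcases hq with g|g|g|g|g|g <;>
      simp_all [Fin.ext_iff] <;> exact hab (by rw [h.1, g.1])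
  · -- za-part vs xa1-part
    rw [Finset.disjoint_left]
    intro p hp hq
    simp at hp hq
    obtain ⟨z, rfl⟩ := hp
    simp at hq
  · -- gadget part vs rest
    rw [Finset.disjoint_left]
    intro p hp hq
    simp only [Finset.mem_biUnion] at hp
    obtain ⟨t, _, hp⟩ := hp
    simp only [Finset.mem_union, Finset.mem_image, Finset.mem_univ, true_and] at hq
    rcases hq with ⟨z, hz⟩ | ⟨x, hx⟩ <;> subst_vars <;> simp [egad, Prod.ext_iff] at hp

lemma sum_map_add {α : Type} (g h : α → ℕ) (r : List α) :
    (r.map fun c => g c + h c).sum = (r.map g).sum + (r.map h).sum := by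
  induction r with
  | nil => simp
  | cons c r ih => simp [ih]; ring


lemma forward {n : ℕ} {T : Finset (Fin n × Fin n × Fin n)}
    (r : List (List (RAg n × RIt n)))
    (hr : ValidExec ⟨RS n T, RD n T⟩ r) (hx : exchanges r = 8 * n) :
    ∃ S ⊆ T, S.card = n ∧ IsPartialMatching S := by
  have hInv0 : GInv (RS n T) (RD n T) ⟨RS n T, RD n T⟩ := GInv_init RS_RD_disj
  have capR : ∀ p : RAg n × RIt n, Rv r p ≤ if p.2 ∈ RD n T p.1 then 1 else 0 := by
    rintro ⟨i, j⟩
    exact cap_recv i j r _ hr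
  have capR1 : ∀ p : RAg n × RIt n, Rv r p ≤ 1 := by
    intro p
    refine (capR p).trans ?_
    split_ifs <;> omega
  have capG : ∀ p : RAg n × RIt n,
      Gv r p ≤ (if p.2 ∈ RS n T p.1 then 1 else 0) + Rv r p := by
    rintro ⟨i, j⟩
    exact cap_give i j r _ hInv0 hr
  have hya0 : ∀ y : Fin n, Rv r (.ya y, .yi y) = 0 := by
    intro y
    have h := capR (.ya y, .yi y)
    rw [if_neg (by simp [RD])] at h
    omega
  have hxa30 : ∀ x : Fin n, Rv r (.xa3 x, .xi x) = 0 := by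
    intro x
    have h := capR (.xa3 x, .xi x)
    rw [if_neg (by simp [RD])] at h
    omega
  have hGya : ∀ y : Fin n, Gv r (.ya y, .yi y) ≤ 1 := by
    intro y
    have h := capG (.ya y, .yi y)
    rw [hya0 y] at h
    refine h.trans ?_
    split_ifs <;> omega
  have hGxa3 : ∀ x : Fin n, Gv r (.xa3 x, .xi x) ≤ 1 := by
    intro x
    have h := capG (.xa3 x, .xi x)
    rw [hxa30 x] at h
    refine h.trans ?_
    split_ifs <;> omega
  have hrev : ∀ t, Gv r (.ga t 0, .gi t 3) ≤ Rv r (.ga t 0, .gi t 3) := by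
    intro t
    have h := capG (.ga t 0, .gi t 3)
    rw [if_neg (by
      intro hc
      simp only [RS] at hc
      split_ifs at hc
      · simp only [Finset.mem_singleton, RIt.gi.injEq] at hc
        have h3 := hc.2
        revert h3
        decide
      · simp at hc)] at h
    simpa using h
  -- transported inequalities
  have E1 : ∀ t ∈ T, Rv r (.ga t 0, .gi t 1) ≤ Rv r (.ga t 1, .yi t.2.1) := fun t ht =>
    exec_sum_le _ _ (fun s c hI hv => pc1 hI hv ht) r _ hInv0 hr
  have E2 : ∀ t ∈ T, Rv r (.ya t.2.1, .gi t 2) ≤ Rv r (.ga t 2, .gi t 3) := fun t ht =>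
    exec_sum_le _ _ (fun s c hI hv => pc2 hI hv ht) r _ hInv0 hr
  have E3 : ∀ t ∈ T, Rv r (.ga t 0, .gi t 3) ≤ Rv r (.xa3 t.1, .gi t 0) := fun t ht =>
    exec_sum_le _ _ (fun s c hI hv => pc3 hI hv ht) r _ hInv0 hr
  have E4 : ∀ t ∈ T, Rv r (.ga t 0, .gi t 3) ≤ Gv r (.za t.2.2, .gi t 3) := fun t ht =>
    exec_sum_le _ _ (fun s c hI hv => pc4 hI hv ht) r _ hInv0 hr
  have E5 : ∀ t ∈ T, Rv r (.ga t 2, .gi t 3) + Rv r (.ga t 0, .gi t 3) ≤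
      Gv r (.za t.2.2, .gi t 3) + Gv r (.ga t 0, .gi t 3) := by
    intro t ht
    have h := exec_sum_le
      (fun c => cnt c (.ga t 2, .gi t 3) + cnt c (.ga t 0, .gi t 3))
      (fun c => cnt (gives c) (.za t.2.2, .gi t 3) + cnt (gives c) (.ga t 0, .gi t 3))
      (fun s c hI hv => pc5 hI hv ht) r _ hInv0 hr
    rwa [sum_map_add, sum_map_add] at h
  have E6 : ∀ t ∈ T, Rv r (.ga t 0, .gi t 1) ≤
      Rv r (.xa3 t.1, .gi t 0) + Gv r (.ga t 0, .gi t 3) := by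
    intro t ht
    have h := exec_sum_le
      (fun c => cnt c (.ga t 0, .gi t 1))
      (fun c => cnt c (.xa3 t.1, .gi t 0) + cnt (gives c) (.ga t 0, .gi t 3))
      (fun s c hI hv => pc6 hI hv ht) r _ hInv0 hr
    rwa [sum_map_add] at h
  have E7 : ∀ y : Fin n,
      (∑ t ∈ T.filter (fun t => t.2.1 = y), Rv r (.ga t 1, .yi y)) ≤
        Gv r (.ya y, .yi y) := by
    intro y
    have h := exec_sum_le
      (fun c => ∑ t ∈ T.filter (fun t => t.2.1 = y), cnt c (.ga t 1, .yi y))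
      (fun c => cnt (gives c) (.ya y, .yi y))
      (fun s c hI hv => pc7 hI hv y) r _ hInv0 hr
    rwa [listsum_swap] at h
  have E8 : ∀ x : Fin n,
      (∑ t ∈ T.filter (fun t => t.1 = x), Rv r (.xa3 x, .gi t 0)) ≤
        Gv r (.xa3 x, .xi x) := by
    intro x
    have h := exec_sum_le
      (fun c => ∑ t ∈ T.filter (fun t => t.1 = x), cnt c (.xa3 x, .gi t 0))
      (fun c => cnt (gives c) (.xa3 x, .xi x))
      (fun s c hI hv => pc8 hI hv x) r _ hInv0 hr
    rwa [listsum_swap] at h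
  have E9 : ∀ z : Fin n,
      (∑ t ∈ T.filter (fun t => t.2.2 = z), Gv r (.za z, .gi t 3)) ≤
        Rv r (.za z, .zi z) := by
    intro z
    have h := exec_sum_le
      (fun c => ∑ t ∈ T.filter (fun t => t.2.2 = z), cnt (gives c) (.za z, .gi t 3))
      (fun c => cnt c (.za z, .zi z))
      (fun s c hI hv => pc9 hI hv z) r _ hInv0 hr
    rwa [listsum_swap] at h
  -- fiber bounds
  have hfiby : ∀ y : Fin n,
      (∑ t ∈ T.filter (fun t => t.2.1 = y), Rv r (.ga t 1, .yi t.2.1)) ≤ 1 := by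
    intro y
    have he : (∑ t ∈ T.filter (fun t => t.2.1 = y), Rv r (.ga t 1, .yi t.2.1)) =
        ∑ t ∈ T.filter (fun t => t.2.1 = y), Rv r (.ga t 1, .yi y) := by
      apply Finset.sum_congr rfl
      intro t ht
      rw [(Finset.mem_filter.1 ht).2]
    rw [he]
    exact (E7 y).trans (hGya y)
  have hfibx : ∀ x : Fin n,
      (∑ t ∈ T.filter (fun t => t.1 = x), Rv r (.xa3 t.1, .gi t 0)) ≤ 1 := by
    intro x
    have he : (∑ t ∈ T.filter (fun t => t.1 = x), Rv r (.xa3 t.1, .gi t 0)) =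
        ∑ t ∈ T.filter (fun t => t.1 = x), Rv r (.xa3 x, .gi t 0) := by
      apply Finset.sum_congr rfl
      intro t ht
      rw [(Finset.mem_filter.1 ht).2]
    rw [he]
    exact (E8 x).trans (hGxa3 x)
  have hfibz : ∀ z : Fin n,
      (∑ t ∈ T.filter (fun t => t.2.2 = z), Gv r (.za t.2.2, .gi t 3)) ≤
        Rv r (.za z, .zi z) := by
    intro z
    have he : (∑ t ∈ T.filter (fun t => t.2.2 = z), Gv r (.za t.2.2, .gi t 3)) =
        ∑ t ∈ T.filter (fun t => t.2.2 = z), Gv r (.za z, .gi t 3) := by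
      apply Finset.sum_congr rfl
      intro t ht
      rw [(Finset.mem_filter.1 ht).2]
    rw [he]
    exact E9 z
  -- global sums
  have hsumy : (∑ t ∈ T, Rv r (.ga t 1, .yi t.2.1)) ≤ n := by
    rw [← Finset.sum_fiberwise_of_maps_to (g := fun t => t.2.1) (t := Finset.univ)
      (fun t _ => Finset.mem_univ _) (fun t => Rv r (.ga t 1, .yi t.2.1))]
    calc (∑ y : Fin n, ∑ t ∈ T.filter (fun t => t.2.1 = y), Rv r (.ga t 1, .yi t.2.1))
        ≤ ∑ _y : Fin n, 1 := Finset.sum_le_sum (fun y _ => hfiby y)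
      _ = n := by simp
  have hsumx : (∑ t ∈ T, Rv r (.xa3 t.1, .gi t 0)) ≤ n := by
    rw [← Finset.sum_fiberwise_of_maps_to (g := fun t => t.1) (t := Finset.univ)
      (fun t _ => Finset.mem_univ _) (fun t => Rv r (.xa3 t.1, .gi t 0))]
    calc (∑ x : Fin n, ∑ t ∈ T.filter (fun t => t.1 = x), Rv r (.xa3 t.1, .gi t 0))
        ≤ ∑ _x : Fin n, 1 := Finset.sum_le_sum (fun x _ => hfibx x)
      _ = n := by simp
  have hsumz : (∑ t ∈ T, Gv r (.za t.2.2, .gi t 3)) ≤ ∑ z : Fin n, Rv r (.za z, .zi z) := by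
    rw [← Finset.sum_fiberwise_of_maps_to (g := fun t => t.2.2) (t := Finset.univ)
      (fun t _ => Finset.mem_univ _) (fun t => Gv r (.za t.2.2, .gi t 3))]
    exact Finset.sum_le_sum (fun z _ => hfibz z)
  have hA : (∑ z : Fin n, Rv r (.za z, .zi z)) ≤ n := by
    calc (∑ z : Fin n, Rv r (.za z, .zi z)) ≤ ∑ _z : Fin n, 1 :=
        Finset.sum_le_sum (fun z _ => capR1 _)
      _ = n := by simp
  have hB : (∑ x : Fin n, Rv r (.xa1 x, .xi x)) ≤ n := by
    calc (∑ x : Fin n, Rv r (.xa1 x, .xi x)) ≤ ∑ _x : Fin n, 1 :=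
        Finset.sum_le_sum (fun x _ => capR1 _)
      _ = n := by simp
  -- decomposition
  have hcov : ∀ p ∈ r.flatten, p ∈ EE n T := fun p hp =>
    cover_EE (exec_mem_dem r _ hr p hp)
  have hdec := exchanges_eq_sum (EE n T) r hcov
  rw [sum_EE (fun p => Rv r p)] at hdec
  -- per-t bound
  have hpt : ∀ t ∈ T,
      Rv r (.ga t 0, .gi t 1) + Rv r (.ga t 0, .gi t 3) + Rv r (.ga t 1, .yi t.2.1) +
        Rv r (.ga t 2, .gi t 3) + Rv r (.ya t.2.1, .gi t 2) + Rv r (.xa3 t.1, .gi t 0) ≤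
      Rv r (.xa3 t.1, .gi t 0) + 2 * Rv r (.ga t 1, .yi t.2.1) +
        3 * Gv r (.za t.2.2, .gi t 3) := by
    intro t ht
    have h1 := E1 t ht
    have h2 := E2 t ht
    have h4 := E4 t ht
    have h5 := E5 t ht
    have hv := hrev t
    omega
  have h6 : (∑ t ∈ T, (Rv r (.ga t 0, .gi t 1) + Rv r (.ga t 0, .gi t 3) +
        Rv r (.ga t 1, .yi t.2.1) + Rv r (.ga t 2, .gi t 3) + Rv r (.ya t.2.1, .gi t 2) +
        Rv r (.xa3 t.1, .gi t 0))) ≤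
      (∑ t ∈ T, Rv r (.xa3 t.1, .gi t 0)) + 2 * (∑ t ∈ T, Rv r (.ga t 1, .yi t.2.1)) +
        3 * (∑ t ∈ T, Gv r (.za t.2.2, .gi t 3)) := by
    rw [Finset.mul_sum, Finset.mul_sum, ← Finset.sum_add_distrib, ← Finset.sum_add_distrib]
    exact Finset.sum_le_sum hpt
  -- extract equalities
  have key : (∑ t ∈ T, Rv r (.xa3 t.1, .gi t 0)) = n ∧
      (∑ t ∈ T, Rv r (.ga t 1, .yi t.2.1)) = n ∧
      (∑ t ∈ T, Gv r (.za t.2.2, .gi t 3)) = n ∧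
      (∑ t ∈ T, (Rv r (.ga t 0, .gi t 1) + Rv r (.ga t 0, .gi t 3) +
        Rv r (.ga t 1, .yi t.2.1) + Rv r (.ga t 2, .gi t 3) + Rv r (.ya t.2.1, .gi t 2) +
        Rv r (.xa3 t.1, .gi t 0))) =
        (∑ t ∈ T, Rv r (.xa3 t.1, .gi t 0)) + 2 * (∑ t ∈ T, Rv r (.ga t 1, .yi t.2.1)) +
          3 * (∑ t ∈ T, Gv r (.za t.2.2, .gi t 3)) := by
    rw [hdec] at hx
    omega
  obtain ⟨ka, kb, kc, keq⟩ := key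
  have hpteq : ∀ t ∈ T,
      Rv r (.ga t 0, .gi t 1) + Rv r (.ga t 0, .gi t 3) + Rv r (.ga t 1, .yi t.2.1) +
        Rv r (.ga t 2, .gi t 3) + Rv r (.ya t.2.1, .gi t 2) + Rv r (.xa3 t.1, .gi t 0) =
      Rv r (.xa3 t.1, .gi t 0) + 2 * Rv r (.ga t 1, .yi t.2.1) +
        3 * Gv r (.za t.2.2, .gi t 3) := by
    apply (Finset.sum_eq_sum_iff_of_le hpt).1
    rw [keq, Finset.mul_sum, Finset.mul_sum, ← Finset.sum_add_distrib, ← Finset.sum_add_distrib]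
  -- pointwise: D3 ≤ D1 and SZ ≤ D1
  have hD3le : ∀ t ∈ T, Rv r (.ga t 1, .yi t.2.1) ≤ Rv r (.xa3 t.1, .gi t 0) := by
    intro t ht
    have h1 := E1 t ht
    have h2 := E2 t ht
    have h3 := E3 t ht
    have h4 := E4 t ht
    have h5 := E5 t ht
    have h6' := E6 t ht
    have hv := hrev t
    have hc1 := capR1 (.ga t 1, .yi t.2.1)
    have heq := hpteq t ht
    omega
  have hSZle : ∀ t ∈ T, Gv r (.za t.2.2, .gi t 3) ≤ Rv r (.xa3 t.1, .gi t 0) := by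
    intro t ht
    have h1 := E1 t ht
    have h2 := E2 t ht
    have h3 := E3 t ht
    have h4 := E4 t ht
    have h5 := E5 t ht
    have hv := hrev t
    have hc1 := capR1 (.ga t 2, .gi t 3)
    have heq := hpteq t ht
    omega
  have hD3eq : ∀ t ∈ T, Rv r (.ga t 1, .yi t.2.1) = Rv r (.xa3 t.1, .gi t 0) := by
    apply (Finset.sum_eq_sum_iff_of_le hD3le).1
    omega
  have hSZeq : ∀ t ∈ T, Gv r (.za t.2.2, .gi t 3) = Rv r (.xa3 t.1, .gi t 0) := by
    apply (Finset.sum_eq_sum_iff_of_le hSZle).1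
    omega
  -- the matching
  refine ⟨T.filter (fun t => 1 ≤ Rv r (.xa3 t.1, .gi t 0)), Finset.filter_subset _ _, ?_, ?_⟩
  · -- cardinality
    have hsplit := Finset.sum_filter_add_sum_filter_not T
      (fun t => 1 ≤ Rv r (.xa3 t.1, .gi t 0)) (fun t => Rv r (.xa3 t.1, .gi t 0))
    have hzero : (∑ t ∈ T.filter (fun t => ¬ 1 ≤ Rv r (.xa3 t.1, .gi t 0)),
        Rv r (.xa3 t.1, .gi t 0)) = 0 := by
      apply Finset.sum_eq_zero
      intro t ht
      have := (Finset.mem_filter.1 ht).2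
      omega
    have hone : (∑ t ∈ T.filter (fun t => 1 ≤ Rv r (.xa3 t.1, .gi t 0)),
        Rv r (.xa3 t.1, .gi t 0)) =
        (T.filter (fun t => 1 ≤ Rv r (.xa3 t.1, .gi t 0))).card := by
      rw [Finset.card_eq_sum_ones]
      apply Finset.sum_congr rfl
      intro t ht
      have h1 := (Finset.mem_filter.1 ht).2
      have h2 := capR1 ((.xa3 t.1 : RAg n), (.gi t 0 : RIt n))
      omega
    omega
  · -- partial matching
    intro t ht t' ht' hne
    rw [Finset.mem_filter] at ht ht'
    obtain ⟨htT, htD⟩ := ht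
    obtain ⟨ht'T, ht'D⟩ := ht'
    refine ⟨?_, ?_, ?_⟩
    · intro hco
      have hsub : ({t, t'} : Finset _) ⊆ T.filter (fun u => u.1 = t.1) := by
        intro u hu
        rcases Finset.mem_insert.1 hu with rfl | hu
        · exact Finset.mem_filter.2 ⟨htT, rfl⟩
        · rw [Finset.mem_singleton.1 hu]
          exact Finset.mem_filter.2 ⟨ht'T, hco.symm⟩
      have hle := Finset.sum_le_sum_of_subset (f := fun u => Rv r (.xa3 u.1, .gi u 0)) hsub
      rw [Finset.sum_pair hne] at hle
      beta_reduce at hle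
      have := hfibx t.1
      omega
    · intro hco
      have hsub : ({t, t'} : Finset _) ⊆ T.filter (fun u => u.2.1 = t.2.1) := by
        intro u hu
        rcases Finset.mem_insert.1 hu with rfl | hu
        · exact Finset.mem_filter.2 ⟨htT, rfl⟩
        · rw [Finset.mem_singleton.1 hu]
          exact Finset.mem_filter.2 ⟨ht'T, hco.symm⟩
      have hle := Finset.sum_le_sum_of_subset (f := fun u => Rv r (.ga u 1, .yi u.2.1)) hsub
      rw [Finset.sum_pair hne] at hle
      beta_reduce at hle
      have h1 := hD3eq t htT
      have h2 := hD3eq t' ht'T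
      have := hfiby t.2.1
      omega
    · intro hco
      have hsub : ({t, t'} : Finset _) ⊆ T.filter (fun u => u.2.2 = t.2.2) := by
        intro u hu
        rcases Finset.mem_insert.1 hu with rfl | hu
        · exact Finset.mem_filter.2 ⟨htT, rfl⟩
        · rw [Finset.mem_singleton.1 hu]
          exact Finset.mem_filter.2 ⟨ht'T, hco.symm⟩
      have hle := Finset.sum_le_sum_of_subset (f := fun u => Gv r (.za u.2.2, .gi u 3)) hsub
      rw [Finset.sum_pair hne] at hle
      beta_reduce at hle
      have h1 := hSZeq t htT
      have h2 := hSZeq t' ht'T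
      have h3 := hfibz t.2.2
      have h4 := capR1 ((.za t.2.2 : RAg n), (.zi t.2.2 : RIt n))
      omega


-- Backward direction
variable {n : ℕ} {T : Finset (Fin n × Fin n × Fin n)}

def Xc {n : ℕ} (t : Fin n × Fin n × Fin n) : List (RAg n × RIt n) :=
  [(.xa1 t.1, .xi t.1), (.xa3 t.1, .gi t 0), (.ga t 0, .gi t 3), (.za t.2.2, .zi t.2.2)]

def Yc {n : ℕ} (t : Fin n × Fin n × Fin n) : List (RAg n × RIt n) :=
  [(.ga t 0, .gi t 1), (.ga t 1, .yi t.2.1), (.ya t.2.1, .gi t 2), (.ga t 2, .gi t 3)]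

lemma gives_Xc {n : ℕ} (t : Fin n × Fin n × Fin n) :
    gives (Xc t) = [(.xa1 t.1, .zi t.2.2), (.xa3 t.1, .xi t.1),
      (.ga t 0, .gi t 0), (.za t.2.2, .gi t 3)] := rfl

lemma gives_Yc {n : ℕ} (t : Fin n × Fin n × Fin n) :
    gives (Yc t) = [(.ga t 0, .gi t 3), (.ga t 1, .gi t 1),
      (.ya t.2.1, .yi t.2.1), (.ga t 2, .gi t 2)] := rfl

def LocalA {n : ℕ} (t : Fin n × Fin n × Fin n) : List (RAg n) :=
  [.ga t 0, .ga t 1, .ga t 2, .ya t.2.1, .za t.2.2, .xa1 t.1, .xa3 t.1]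

def Loc (s : TState (RAg n) (RIt n)) (t : Fin n × Fin n × Fin n) : Prop :=
  ∀ i ∈ LocalA (n := n) t, s.own i = RS n T i ∧ s.dem i = RD n T i

lemma step_untouched {s : TState (RAg n) (RIt n)} {c : List (RAg n × RIt n)} {i : RAg n}
    (h : i ∉ c.map Prod.fst) :
    (stepCycle s c).own i = s.own i ∧ (stepCycle s c).dem i = s.dem i := by
  constructor
  · ext j
    rw [mem_own_step]
    constructor
    · rintro (⟨h1, _⟩ | h1)
      · exact h1
      · exact absurd (List.mem_map.2 ⟨(i, j), h1, rfl⟩) h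
    · intro hj
      refine Or.inl ⟨hj, fun hg => ?_⟩
      rw [← gives_map_fst] at h
      exact h (List.mem_map.2 ⟨(i, j), hg, rfl⟩)
  · ext j
    rw [mem_dem_step]
    constructor
    · exact fun h1 => h1.1
    · intro hj
      exact ⟨hj, fun hc => h (List.mem_map.2 ⟨(i, j), hc, rfl⟩)⟩

lemma valid_Xc {s : TState (RAg n) (RIt n)} {t} (ht : t ∈ T) (hL : Loc (T := T) s t) :
    ValidCycle s (Xc t) := by
  have h1 := hL (.xa1 t.1) (by simp [LocalA])
  have h2 := hL (.xa3 t.1) (by simp [LocalA])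
  have h3 := hL (.ga t 0) (by simp [LocalA])
  have h4 := hL (.za t.2.2) (by simp [LocalA])
  refine ⟨by simp [Xc], by simp [Xc], by simp [Xc, Fin.ext_iff] <;> decide, ?_, ?_⟩
  · rintro ⟨i, j⟩ hp
    simp only [Xc, List.mem_cons, List.not_mem_nil, or_false, Prod.mk.injEq] at hp
    rcases hp with ⟨rfl, rfl⟩ | ⟨rfl, rfl⟩ | ⟨rfl, rfl⟩ | ⟨rfl, rfl⟩
    · rw [h1.2]; simp [RD]
    · rw [h2.2]; simp only [RD, Finset.mem_image]
      exact ⟨t, by simp [ht], rfl⟩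
    · rw [h3.2]; simp [RD, ht]
    · rw [h4.2]; simp [RD]
  · rintro ⟨i, j⟩ hp
    rw [gives_Xc] at hp
    simp only [List.mem_cons, List.not_mem_nil, or_false, Prod.mk.injEq] at hp
    rcases hp with ⟨rfl, rfl⟩ | ⟨rfl, rfl⟩ | ⟨rfl, rfl⟩ | ⟨rfl, rfl⟩
    · rw [h1.1]; simp [RS]
    · rw [h2.1]; simp [RS]
    · rw [h3.1]; simp [RS, ht]; try rfl
    · rw [h4.1]; simp only [RS, Finset.mem_image]
      exact ⟨t, by simp [ht], rfl⟩

lemma valid_Yc {s : TState (RAg n) (RIt n)} {t} (ht : t ∈ T) (hL : Loc (T := T) s t) :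
    ValidCycle (stepCycle s (Xc t)) (Yc t) := by
  have h0 := hL (.ga t 0) (by simp [LocalA])
  have h1 := hL (.ga t 1) (by simp [LocalA])
  have h2 := hL (.ga t 2) (by simp [LocalA])
  have hy := hL (.ya t.2.1) (by simp [LocalA])
  have u1 := step_untouched (s := s) (c := Xc t) (i := .ga t 1)
    (by simp [Xc, Fin.ext_iff] <;> decide)
  have u2 := step_untouched (s := s) (c := Xc t) (i := .ga t 2)
    (by simp [Xc, Fin.ext_iff] <;> decide)
  have uy := step_untouched (s := s) (c := Xc t) (i := .ya t.2.1) (by simp [Xc])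
  refine ⟨by simp [Yc], by simp [Yc, Fin.ext_iff] <;> decide, by simp [Yc, Fin.ext_iff] <;> decide, ?_, ?_⟩
  · rintro ⟨i, j⟩ hp
    simp only [Yc, List.mem_cons, List.not_mem_nil, or_false, Prod.mk.injEq] at hp
    rcases hp with ⟨rfl, rfl⟩ | ⟨rfl, rfl⟩ | ⟨rfl, rfl⟩ | ⟨rfl, rfl⟩
    · show _ ∈ (stepCycle s (Xc t)).dem _
      rw [mem_dem_step, h0.2]
      constructor
      · simp [RD, ht]
      · simp [Xc, Fin.ext_iff] <;> decide
    · show _ ∈ (stepCycle s (Xc t)).dem _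
      rw [u1.2, h1.2]
      simp [RD, ht]
    · show _ ∈ (stepCycle s (Xc t)).dem _
      rw [uy.2, hy.2]
      simp only [RD, Finset.mem_image]
      exact ⟨t, by simp [ht], rfl⟩
    · show _ ∈ (stepCycle s (Xc t)).dem _
      rw [u2.2, h2.2]
      simp [RD, ht]
  · rintro ⟨i, j⟩ hp
    rw [gives_Yc] at hp
    simp only [List.mem_cons, List.not_mem_nil, or_false, Prod.mk.injEq] at hp
    rcases hp with ⟨rfl, rfl⟩ | ⟨rfl, rfl⟩ | ⟨rfl, rfl⟩ | ⟨rfl, rfl⟩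
    · show _ ∈ (stepCycle s (Xc t)).own _
      rw [mem_own_step]
      right
      simp [Xc]
    · show _ ∈ (stepCycle s (Xc t)).own _
      rw [u1.1, h1.1]
      simp [RS, ht]
      try rfl
    · show _ ∈ (stepCycle s (Xc t)).own _
      rw [uy.1, hy.1]
      simp [RS]
    · show _ ∈ (stepCycle s (Xc t)).own _
      rw [u2.1, h2.1]
      simp [RS, ht]
      try rfl

lemma LocalA_disj {t t' : Fin n × Fin n × Fin n} (h1 : t.1 ≠ t'.1)
    (h2 : t.2.1 ≠ t'.2.1) (h3 : t.2.2 ≠ t'.2.2) {i : RAg n}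
    (hi : i ∈ LocalA t) (hi' : i ∈ LocalA t') : False := by
  have hne : t ≠ t' := fun h => h1 (by rw [h])
  simp only [LocalA, List.mem_cons, List.not_mem_nil, or_false] at hi hi'
  rcases hi with rfl|rfl|rfl|rfl|rfl|rfl|rfl <;> simp_all

lemma Loc_step {s : TState (RAg n) (RIt n)} {t t'} (hL : Loc (T := T) s t')
    (h1 : t.1 ≠ t'.1) (h2 : t.2.1 ≠ t'.2.1) (h3 : t.2.2 ≠ t'.2.2) :
    Loc (T := T) (stepCycle (stepCycle s (Xc t)) (Yc t)) t' := by
  intro i hi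
  have hx : i ∉ (Xc t).map Prod.fst := by
    intro hmem
    apply LocalA_disj h1 h2 h3 _ hi
    simp only [Xc, List.map_cons, List.map_nil, List.mem_cons, List.not_mem_nil, or_false] at hmem
    rcases hmem with rfl|rfl|rfl|rfl <;> simp [LocalA]
  have hy : i ∉ (Yc t).map Prod.fst := by
    intro hmem
    apply LocalA_disj h1 h2 h3 _ hi
    simp only [Yc, List.map_cons, List.map_nil, List.mem_cons, List.not_mem_nil, or_false] at hmem
    rcases hmem with rfl|rfl|rfl|rfl <;> simp [LocalA]
  have s1 := step_untouched (s := s) (c := Xc t) hx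
  have s2 := step_untouched (s := stepCycle s (Xc t)) (c := Yc t) hy
  rw [s2.1, s2.2, s1.1, s1.2]
  exact hL i hi

lemma exec_of_list :
    ∀ (l : List (Fin n × Fin n × Fin n)) (s : TState (RAg n) (RIt n)),
      (∀ t ∈ l, t ∈ T) →
      (∀ t ∈ l, ∀ t' ∈ l, t ≠ t' → t.1 ≠ t'.1 ∧ t.2.1 ≠ t'.2.1 ∧ t.2.2 ≠ t'.2.2) →
      l.Nodup →
      (∀ t ∈ l, Loc (T := T) s t) →
      ValidExec s (l.flatMap fun t => [Xc t, Yc t]) := by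
  intro l
  induction l with
  | nil => intro s _ _ _ _; simp [ValidExec]
  | cons t l ih =>
    intro s hT hmat hnd hL
    have ht := hT t (by simp)
    have hLt := hL t (by simp)
    rw [List.flatMap_cons]
    refine ⟨valid_Xc ht hLt, valid_Yc ht hLt, ?_⟩
    apply ih _ (fun u hu => hT u (by simp [hu]))
      (fun u hu u' hu' => hmat u (by simp [hu]) u' (by simp [hu']))
      (List.nodup_cons.1 hnd).2
    intro t' ht'
    have hne : t ≠ t' := by
      rintro rfl
      exact (List.nodup_cons.1 hnd).1 ht'
    obtain ⟨d1, d2, d3⟩ := hmat t (by simp) t' (by simp [ht']) hne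
    exact Loc_step (hL t' (by simp [ht'])) d1 d2 d3

lemma exchanges_flatMap (l : List (Fin n × Fin n × Fin n)) :
    exchanges (l.flatMap fun t => [Xc (n := n) t, Yc t]) = 8 * l.length := by
  induction l with
  | nil => simp [exchanges]
  | cons t l ih =>
    rw [List.flatMap_cons]
    simp only [exchanges, List.map_cons, List.map_append, List.sum_cons] at ih ⊢
    rw [List.sum_append] at *
    simp [Xc, Yc] at *
    omega

lemma backward {n : ℕ} {T S : Finset (Fin n × Fin n × Fin n)} (hST : S ⊆ T)
    (hcard : S.card = n) (hM : IsPartialMatching S) :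
    ∃ r : List (List (RAg n × RIt n)),
      ValidExec ⟨RS n T, RD n T⟩ r ∧ exchanges r = 8 * n := by
  refine ⟨S.toList.flatMap fun t => [Xc t, Yc t], ?_, ?_⟩
  · apply exec_of_list
    · intro t htl
      exact hST (by rwa [← Finset.mem_toList])
    · intro t htl t' htl' hne
      exact hM t (by rwa [← Finset.mem_toList]) t' (by rwa [← Finset.mem_toList]) hne
    · exact S.nodup_toList
    · intro t _
      intro i _
      exact ⟨rfl, rfl⟩
  · rw [exchanges_flatMap, Finset.length_toList, hcard]

end S14

/-- The reduction trading graph admits an execution with exactly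
`8n` exchanges iff the 3D-matching instance `(X,Y,Z,T)` admits a perfect matching. -/
theorem stmt14 (n : ℕ) (T : Finset (Fin n × Fin n × Fin n)) :
    (∃ r : List (List (RAg n × RIt n)),
        ValidExec ⟨RS n T, RD n T⟩ r ∧ exchanges r = 8 * n) ↔
    (∃ S ⊆ T, S.card = n ∧ IsPartialMatching S) := by
  constructor
  · rintro ⟨r, hr, hx⟩
    exact S14.forward r hr hx
  · rintro ⟨S, hST, hcard, hM⟩
    exact S14.backward hST hcard hM
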